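/- Let W be a complete positive ordered abelian semigroup that satisfies the weak ω-comparison property and contains elements v, w with v ≪ w and v full. Then W satisfies the Corona Factorization Property for semigroups. -/
import Mathlib


namespace Stmt3

variable {W : Type*} [AddCommSemigroup W] [PartialOrder W]

/-- `rep n x` is the `(n+1)`-fold sum `x + x + ⋯ + x`, so that `rep n x = (n+1)·x`. -/
def rep : ℕ → W → W
  | 0, x => x
  | n + 1, x => rep n x + x

/-- `sumTo y n = y 0 + y 1 + ⋯ + y n`. -/
def sumTo (y : ℕ → W) : ℕ → W
  | 0 => y 0
  | n + 1 => sumTo y n + y (n + 1)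

/-- `x ∝ y` : `x ≤ n·y` for some positive integer `n` (encoded as `n + 1`, `n : ℕ`). -/
def Propto (x y : W) : Prop := ∃ n : ℕ, x ≤ rep n y

/-- `x <_s y` : `(k+1)·x ≤ k·y` for some positive integer `k`. -/
def StDom (x y : W) : Prop := ∃ k : ℕ, rep (k + 1) x ≤ rep k y

/-- `x ≪ y` : for every increasing sequence whose supremum exists and dominates `y`,
some term of the sequence dominates `x`. -/
def CC (x y : W) : Prop :=
  ∀ f : ℕ → W, Monotone f → ∀ s : W, IsLUB (Set.range f) s → y ≤ s → ∃ n, x ≤ f n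

/-- `W` is complete: every increasing sequence has a supremum, and `x ≤ y` holds as soon
as `x' ≤ y` for every `x' ≪ x`. -/
def Complete (W : Type*) [AddCommSemigroup W] [PartialOrder W] : Prop :=
  (∀ f : ℕ → W, Monotone f → ∃ s : W, IsLUB (Set.range f) s) ∧
    ∀ x y : W, (∀ x' : W, CC x' x → x' ≤ y) → x ≤ y

/-- A full sequence: increasing, and for all `y' ≪ y` one has `y' ∝ x n` for some `n`. -/
def FullSeq (x : ℕ → W) : Prop :=
  Monotone x ∧ ∀ y' y : W, CC y' y → ∃ n, Propto y' (x n)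

/-- A full element: `y' ∝ x` for all `y' ≪ y`. -/
def FullElem (x : W) : Prop := ∀ y' y : W, CC y' y → Propto y' x

/-- The Corona Factorization Property for semigroups: for every full sequence `(x_n)`,
every sequence `(y_n)`, every `x' ≪ x_0` and every positive integer `m` (encoded `m+1`)
with `x_n ≤ m·y_n` for all `n`, one has `x' ≤ y_0 + ⋯ + y_k` for some `k`. -/
def CFP (W : Type*) [AddCommSemigroup W] [PartialOrder W] : Prop :=
  ∀ x : ℕ → W, FullSeq x → ∀ y : ℕ → W, ∀ x' : W, ∀ m : ℕ,
    CC x' (x 0) → (∀ n, x n ≤ rep m (y n)) → ∃ k, x' ≤ sumTo y k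


/-- The weak ω-comparison property: whenever `x' ≪ x`, the `y_j` are full elements, and
`x <_s y_j` for all `j`, then `x' ≤ y_0 + ⋯ + y_n` for some `n`. -/
def WeakOmegaComparison (W : Type*) [AddCommSemigroup W] [PartialOrder W] : Prop :=
  ∀ x' x : W, ∀ y : ℕ → W, (∀ j, FullElem (y j)) → CC x' x → (∀ j, StDom x (y j)) →
    ∃ n, x' ≤ sumTo y n

/-- Segment sum: `seg f a r = f a + f (a+1) + ⋯ + f (a+r)`. -/
def seg (f : ℕ → W) (a : ℕ) : ℕ → W
  | 0 => f a
  | r + 1 => seg f a r + f (a + r + 1)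

section Aux

set_option linter.unusedSectionVars false

lemma add_le_add'' (hadd : ∀ x y z : W, x ≤ y → x + z ≤ y + z) {a b c d : W} (h1 : a ≤ b) (h2 : c ≤ d) : a + c ≤ b + d := by
  calc a + c ≤ b + c := hadd a b c h1
    _ = c + b := add_comm _ _
    _ ≤ d + b := hadd c d b h2
    _ = b + d := add_comm _ _

lemma rep_mono (hadd : ∀ x y z : W, x ≤ y → x + z ≤ y + z) {a b : W} (h : a ≤ b) : ∀ n, rep n a ≤ rep n b := by
  intro n
  induction n with
  | zero => exact h
  | succ k ih => exact add_le_add'' hadd ih h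

lemma le_rep (hpos : ∀ x z : W, x ≤ x + z) (a : W) : ∀ n, a ≤ rep n a := by
  intro n
  induction n with
  | zero => exact le_refl _
  | succ k ih => exact le_trans ih (hpos _ _)

lemma rep_add_rep (a : W) (s : ℕ) : ∀ t, rep s a + rep t a = rep (s + t + 1) a := by
  intro t
  induction t with
  | zero => rfl
  | succ k ih =>
    show rep s a + (rep k a + a) = _
    rw [← add_assoc, ih]
    rfl

lemma rep_rep (a : W) (q : ℕ) : ∀ p, rep p (rep q a) = rep (p * q + p + q) a := by
  intro p
  induction p with
  | zero => simp [rep]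
  | succ k ih =>
    show rep k (rep q a) + rep q a = _
    rw [ih, rep_add_rep]
    congr 1
    ring

lemma rep_add (a b : W) : ∀ n, rep n (a + b) = rep n a + rep n b := by
  intro n
  induction n with
  | zero => rfl
  | succ k ih =>
    show rep k (a + b) + (a + b) = (rep k a + a) + (rep k b + b)
    rw [ih, add_add_add_comm]

lemma le_seg (hpos : ∀ x z : W, x ≤ x + z) (f : ℕ → W) (a : ℕ) : ∀ r, f a ≤ seg f a r := by
  intro r
  induction r with
  | zero => exact le_refl _
  | succ k ih => exact le_trans ih (hpos _ _)

lemma seg_mono (hadd : ∀ x y z : W, x ≤ y → x + z ≤ y + z) {f g : ℕ → W} {a : ℕ} (h : ∀ i, f (a + i) ≤ g (a + i)) :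
    ∀ r, seg f a r ≤ seg g a r := by
  intro r
  induction r with
  | zero => exact h 0
  | succ k ih =>
    exact add_le_add'' hadd ih (h (k + 1))

lemma seg_const (c : W) (a : ℕ) : ∀ r, seg (fun _ => c) a r = rep r c := by
  intro r
  induction r with
  | zero => rfl
  | succ k ih =>
    show seg (fun _ => c) a k + c = rep k c + c
    rw [ih]

lemma rep_seg (f : ℕ → W) (m a : ℕ) :
    ∀ r, seg (fun i => rep m (f i)) a r = rep m (seg f a r) := by
  intro r
  induction r with
  | zero => rfl
  | succ k ih =>
    show seg (fun i => rep m (f i)) a k + rep m (f (a + k + 1)) = _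
    rw [ih, ← rep_add]
    rfl

lemma seg_append (f : ℕ → W) (a r : ℕ) :
    ∀ t, seg f a r + seg f (a + r + 1) t = seg f a (r + t + 1) := by
  intro t
  induction t with
  | zero => rfl
  | succ k ih =>
    show seg f a r + (seg f (a + r + 1) k + f (a + r + 1 + k + 1)) = _
    rw [← add_assoc, ih]
    show _ = seg f a (r + k + 1) + f (a + (r + k + 1) + 1)
    congr 2
    omega

lemma sumTo_split (f : ℕ → W) (a : ℕ) :
    ∀ r, sumTo f (a + 1 + r) = sumTo f a + seg f (a + 1) r := by
  intro r
  induction r with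
  | zero => rfl
  | succ k ih =>
    show sumTo f (a + 1 + k + 1) = sumTo f a + (seg f (a + 1) k + f (a + 1 + k + 1))
    rw [← add_assoc, ← ih]
    rfl

lemma seg_zero_eq_sumTo (f : ℕ → W) : ∀ r, seg f 0 r = sumTo f r := by
  intro r
  induction r with
  | zero => rfl
  | succ k ih =>
    show seg f 0 k + f (0 + k + 1) = sumTo f k + f (k + 1)
    rw [ih]
    congr 2
    omega

lemma seg_le_sumTo (hpos : ∀ x z : W, x ≤ x + z) (f : ℕ → W) (a r : ℕ) : seg f a r ≤ sumTo f (a + r) := by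
  cases a with
  | zero =>
    rw [seg_zero_eq_sumTo]
    simp
  | succ a' =>
    have h : sumTo f (a' + 1 + r) = sumTo f a' + seg f (a' + 1) r := sumTo_split f a' r
    calc seg f (a' + 1) r ≤ seg f (a' + 1) r + sumTo f a' := hpos _ _
      _ = sumTo f a' + seg f (a' + 1) r := add_comm _ _
      _ = sumTo f (a' + 1 + r) := h.symm

lemma sumTo_blocks (f : ℕ → W) (n₀ m : ℕ) :
    ∀ n, sumTo (fun j => seg f (n₀ + j * (m + 2)) (m + 1)) n
      = seg f n₀ (n * (m + 2) + (m + 1)) := by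
  intro n
  induction n with
  | zero =>
    show seg f (n₀ + 0 * (m + 2)) (m + 1) = seg f n₀ (0 * (m + 2) + (m + 1))
    congr 1 <;> omega
  | succ k ih =>
    show sumTo (fun j => seg f (n₀ + j * (m + 2)) (m + 1)) k
        + seg f (n₀ + (k + 1) * (m + 2)) (m + 1) = _
    rw [ih]
    have h1 : n₀ + (k + 1) * (m + 2) = n₀ + (k * (m + 2) + (m + 1)) + 1 := by ring
    rw [h1, seg_append]
    congr 1
    ring

end Aux

/-- Proposition 2.21: a complete positive ordered abelian semigroup with the weak
ω-comparison property, containing a full element compactly contained in another element,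
satisfies the Corona Factorization Property for semigroups. -/
theorem cfp_of_weakOmegaComparison
    (hadd : ∀ x y z : W, x ≤ y → x + z ≤ y + z)
    (hpos : ∀ x z : W, x ≤ x + z)
    (hcomplete : Complete W)
    (hweak : WeakOmegaComparison W)
    (hvw : ∃ v w : W, CC v w ∧ FullElem v) :
    CFP W := by
  intro x hxfull y x' m hx' hxy
  obtain ⟨hmono, hfull⟩ := hxfull
  obtain ⟨v, w, hvw, hvfull⟩ := hvw
  obtain ⟨n₀, p, hvx⟩ := hfull v w hvw
  -- blocks of m+2 consecutive y's starting at n₀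
  set B : ℕ → W := fun j => seg y (n₀ + j * (m + 2)) (m + 1) with hB
  -- each block is a full element
  have hBfull : ∀ j, FullElem (B j) := by
    intro j y' yy hcc
    obtain ⟨q, hq⟩ := hvfull y' yy hcc
    have h1 : x n₀ ≤ x (n₀ + j * (m + 2)) := hmono (Nat.le_add_right _ _)
    have h2 : x (n₀ + j * (m + 2)) ≤ rep m (y (n₀ + j * (m + 2))) := hxy _
    have h3 : y (n₀ + j * (m + 2)) ≤ B j := le_seg hpos y _ _
    have hvB : v ≤ rep (p * m + p + m) (B j) := by
      calc v ≤ rep p (x n₀) := hvx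
        _ ≤ rep p (rep m (B j)) := by
            refine rep_mono hadd ?_ p
            exact le_trans h1 (le_trans h2 (rep_mono hadd h3 m))
        _ = rep (p * m + p + m) (B j) := rep_rep _ _ _
    refine ⟨q * (p * m + p + m) + q + (p * m + p + m), ?_⟩
    calc y' ≤ rep q v := hq
      _ ≤ rep q (rep (p * m + p + m) (B j)) := rep_mono hadd hvB q
      _ = rep (q * (p * m + p + m) + q + (p * m + p + m)) (B j) := rep_rep _ _ _
  -- x 0 is stably dominated by each block
  have hstdom : ∀ j, StDom (x 0) (B j) := by
    intro j
    refine ⟨m, ?_⟩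
    calc rep (m + 1) (x 0)
        = seg (fun _ => x 0) (n₀ + j * (m + 2)) (m + 1) := (seg_const _ _ _).symm
      _ ≤ seg (fun i => rep m (y i)) (n₀ + j * (m + 2)) (m + 1) := by
          refine seg_mono hadd (fun i => ?_) (m + 1)
          exact le_trans (hmono (Nat.zero_le _)) (hxy _)
      _ = rep m (seg y (n₀ + j * (m + 2)) (m + 1)) := rep_seg y m _ _
      _ = rep m (B j) := rfl
  obtain ⟨n, hn⟩ := hweak x' (x 0) B hBfull hx' hstdom
  refine ⟨n₀ + (n * (m + 2) + (m + 1)), ?_⟩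
  calc x' ≤ sumTo B n := hn
    _ = seg y n₀ (n * (m + 2) + (m + 1)) := sumTo_blocks y n₀ m n
    _ ≤ sumTo y (n₀ + (n * (m + 2) + (m + 1))) := seg_le_sumTo hpos y _ _

end Stmt3
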